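/- Let 0 = c₀ < c₁ < ... < c_m < c_{m+1} = n be integers, let R be the n × (m+1) real matrix whose (t, j+1) entry is the indicator of c_j + 1 ≤ t ≤ c_{j+1}, and for a fixed index 1 ≤ j ≤ m let R_{−j} be the n × m matrix obtained from R by replacing columns j and j+1 by their sum. Then for any vector U ∈ ℝⁿ, ‖(I − Π_{R_{−j}})U‖² − ‖(I − Π_R)U‖² equals the square of the CUSUM statistic C(U) = √((c_{j+1}−c_j)(c_j−c_{j−1})/(c_{j+1}−c_{j−1})) · ( (1/(c_j−c_{j−1})) Σ_{t=c_{j−1}+1}^{c_j} U_t − (1/(c_{j+1}−c_j)) Σ_{t=c_j+1}^{c_{j+1}} U_t ). -/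

import Mathlib

open Matrix Finset

/-- Orthogonal projection matrix onto the column space of `A`. -/
noncomputable def projMat {n m : ℕ} (A : Matrix (Fin n) (Fin m) ℝ) :
    Matrix (Fin n) (Fin n) ℝ :=
  A * (Aᵀ * A)⁻¹ * Aᵀ

private lemma mono_aux (c : ℕ → ℕ) (M : ℕ) (h : ∀ k < M, c k < c (k+1)) :
    ∀ a b, a < b → b ≤ M → c a < c b := by
  intro a b hab hbM
  induction b with
  | zero => omega
  | succ b ih =>
    rcases Nat.lt_or_ge a b with h' | h'
    · exact lt_trans (ih h' (by omega)) (h b (by omega))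
    · have : a = b := by omega
      subst this; exact h a (by omega)

private lemma ind_count (n a b : ℕ) (hab : a ≤ b) (hbn : b ≤ n) :
    ∑ t : Fin n, (if a < (t:ℕ)+1 ∧ (t:ℕ)+1 ≤ b then (1:ℝ) else 0) = (b:ℝ) - a := by
  rw [Fin.sum_univ_eq_sum_range (fun t => if a < t+1 ∧ t+1 ≤ b then (1:ℝ) else 0) n]
  rw [Finset.sum_boole]
  have : (range n).filter (fun t => a < t+1 ∧ t+1 ≤ b) = Finset.Ico a b := by
    ext x; simp [Finset.mem_Ico]; omega
  rw [this, Nat.card_Ico]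
  push_cast [Nat.cast_sub hab]
  ring

private lemma resid (n M : ℕ) (ind : ℕ → ℕ → Fin n → ℝ)
    (hind : ∀ a b (t : Fin n), ind a b t = if a < (t:ℕ)+1 ∧ (t:ℕ)+1 ≤ b then 1 else 0)
    (e : ℕ → ℕ) (hmono : ∀ k < M, e k < e (k+1)) (hlast : e M ≤ n)
    (A : Matrix (Fin n) (Fin M) ℝ)
    (hA : ∀ (t : Fin n) (k : Fin M), A t k = ind (e k) (e ((k:ℕ)+1)) t)
    (U : Fin n → ℝ) :
    ((1 - projMat A) *ᵥ U) ⬝ᵥ ((1 - projMat A) *ᵥ U) =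
      U ⬝ᵥ U - ∑ k ∈ range M, (ind (e k) (e (k+1)) ⬝ᵥ U)^2 / ((e (k+1):ℝ) - e k) := by
  have hmono' : ∀ a b, a < b → b ≤ M → e a < e b := mono_aux e M hmono
  have hle : ∀ k : Fin M, e ((k:ℕ)+1) ≤ n := by
    intro k
    rcases Nat.lt_or_ge ((k:ℕ)+1) M with h | h
    · exact le_of_lt (lt_of_lt_of_le (hmono' _ _ h le_rfl) hlast)
    · have : (k:ℕ)+1 = M := by omega
      rw [this]; exact hlast
  set d : Fin M → ℝ := fun k => (e ((k:ℕ)+1) : ℝ) - e k with hd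
  have hdpos : ∀ k : Fin M, 0 < d k := by
    intro k
    have := hmono k k.isLt
    simp only [hd]
    have : (e (k:ℕ) : ℝ) < e ((k:ℕ)+1) := by exact_mod_cast this
    linarith
  have hdne : ∀ k : Fin M, d k ≠ 0 := fun k => ne_of_gt (hdpos k)
  -- A^T A = diagonal d
  have hdiag : Aᵀ * A = Matrix.diagonal d := by
    ext k l
    simp only [Matrix.mul_apply, Matrix.transpose_apply, Matrix.diagonal_apply]
    rcases eq_or_ne k l with rfl | hne
    · rw [if_pos rfl]
      have : ∀ t : Fin n, A t k * A t k =
          if e (k:ℕ) < (t:ℕ)+1 ∧ (t:ℕ)+1 ≤ e ((k:ℕ)+1) then (1:ℝ) else 0 := by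
        intro t; rw [hA, hind]; split_ifs <;> ring
      rw [Finset.sum_congr rfl (fun t _ => this t)]
      rw [ind_count n _ _ (le_of_lt (hmono k k.isLt)) (hle k)]
    · rw [if_neg hne]
      apply Finset.sum_eq_zero
      intro t _
      rw [hA, hA, hind, hind]
      rcases lt_or_gt_of_ne (fun h : (k:ℕ) = (l:ℕ) => hne (Fin.ext h)) with h | h
      · have hse : e ((k:ℕ)+1) ≤ e (l:ℕ) := by
          rcases Nat.lt_or_ge ((k:ℕ)+1) (l:ℕ) with h' | h'
          · exact le_of_lt (hmono' _ _ h' (by omega))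
          · have : (k:ℕ)+1 = (l:ℕ) := by omega
            rw [this]
        split_ifs with h1 h2 <;> try ring1
        exfalso; omega
      · have hse : e ((l:ℕ)+1) ≤ e (k:ℕ) := by
          rcases Nat.lt_or_ge ((l:ℕ)+1) (k:ℕ) with h' | h'
          · exact le_of_lt (hmono' _ _ h' (by omega))
          · have : (l:ℕ)+1 = (k:ℕ) := by omega
            rw [this]
        split_ifs with h1 h2 <;> try ring1
        exfalso; omega
  -- inverse
  have hinv : (Aᵀ * A)⁻¹ = Matrix.diagonal (fun k => (d k)⁻¹) := by
    rw [hdiag]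
    apply Matrix.inv_eq_right_inv
    rw [Matrix.diagonal_mul_diagonal]
    rw [← Matrix.diagonal_one]
    exact congrArg _ (funext fun k => mul_inv_cancel₀ (hdne k))
  set P : Matrix (Fin n) (Fin n) ℝ := projMat A with hP
  have hPdef : P = A * Matrix.diagonal (fun k => (d k)⁻¹) * Aᵀ := by
    rw [hP, projMat, hinv]
  have hPsym : Pᵀ = P := by
    rw [hPdef]
    simp [Matrix.transpose_mul, Matrix.diagonal_transpose, Matrix.mul_assoc]
  have hPidem : P * P = P := by
    rw [hPdef]
    have : A * Matrix.diagonal (fun k => (d k)⁻¹) * Aᵀ * (A * Matrix.diagonal (fun k => (d k)⁻¹) * Aᵀ)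
        = A * (Matrix.diagonal (fun k => (d k)⁻¹) * (Aᵀ * A) * Matrix.diagonal (fun k => (d k)⁻¹)) * Aᵀ := by
      simp only [Matrix.mul_assoc]
    rw [this, hdiag, Matrix.diagonal_mul_diagonal, Matrix.diagonal_mul_diagonal]
    congr 2
    funext k
    field_simp
  -- quadratic form
  have hquad : U ⬝ᵥ P *ᵥ U = ∑ k ∈ range M,
      (ind (e k) (e (k+1)) ⬝ᵥ U)^2 / ((e (k+1):ℝ) - e k) := by
    rw [hPdef]
    rw [← Matrix.mulVec_mulVec, ← Matrix.mulVec_mulVec]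
    rw [Matrix.dotProduct_mulVec U A]
    have hvm : U ᵥ* A = Aᵀ *ᵥ U := by rw [← Matrix.vecMul_transpose, Matrix.transpose_transpose]
    rw [hvm]
    have hv : ∀ k : Fin M, (Aᵀ *ᵥ U) k = ind (e (k:ℕ)) (e ((k:ℕ)+1)) ⬝ᵥ U := by
      intro k
      simp only [Matrix.mulVec, Matrix.transpose_apply, dotProduct]
      exact Finset.sum_congr rfl (fun t _ => by rw [hA])
    have step : (Aᵀ *ᵥ U) ⬝ᵥ (Matrix.diagonal (fun k => (d k)⁻¹) *ᵥ (Aᵀ *ᵥ U))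
        = ∑ k : Fin M, (ind (e (k:ℕ)) (e ((k:ℕ)+1)) ⬝ᵥ U)^2 * (((e ((k:ℕ)+1):ℝ) - e (k:ℕ)))⁻¹ := by
      rw [dotProduct]
      apply Finset.sum_congr rfl
      intro k _
      rw [Matrix.mulVec_diagonal, hv]
      simp only [hd]
      ring
    rw [step]
    rw [Fin.sum_univ_eq_sum_range (fun k =>
      (ind (e k) (e (k+1)) ⬝ᵥ U)^2 * (((e (k+1):ℝ) - e k))⁻¹) M]
    exact Finset.sum_congr rfl (fun k _ => (div_eq_mul_inv _ _).symm)
  -- putting it together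
  have hexp : (1 - P) *ᵥ U = U - P *ᵥ U := by
    rw [Matrix.sub_mulVec, Matrix.one_mulVec]
  have hswap : U ᵥ* P = P *ᵥ U := by
    conv_lhs => rw [← hPsym]
    rw [Matrix.vecMul_transpose]
  have h2 : (P *ᵥ U) ⬝ᵥ (P *ᵥ U) = U ⬝ᵥ (P *ᵥ U) := by
    nth_rewrite 1 [← hswap]
    rw [← Matrix.dotProduct_mulVec, Matrix.mulVec_mulVec, hPidem]
  rw [hexp]
  have expand : (U - P *ᵥ U) ⬝ᵥ (U - P *ᵥ U)
      = U ⬝ᵥ U - 2*(U ⬝ᵥ (P *ᵥ U)) + (P *ᵥ U) ⬝ᵥ (P *ᵥ U) := by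
    simp only [sub_dotProduct, dotProduct_sub, dotProduct_comm (P *ᵥ U) U]
    ring
  rw [expand, h2, hquad]
  ring

theorem stmt_2 (n m : ℕ) (c : ℕ → ℕ) (hc0 : c 0 = 0) (hclast : c (m + 1) = n)
    (hcmono : ∀ k ≤ m, c k < c (k + 1))
    (j : ℕ) (hj1 : 1 ≤ j) (hjm : j ≤ m)
    (ind : ℕ → ℕ → Fin n → ℝ)
    (hind : ∀ a b (t : Fin n), ind a b t =
      if a < (t : ℕ) + 1 ∧ (t : ℕ) + 1 ≤ b then 1 else 0)
    (R : Matrix (Fin n) (Fin (m + 1)) ℝ)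
    (hR : ∀ (t : Fin n) (k : Fin (m + 1)), R t k = ind (c k) (c (k + 1)) t)
    (Rm : Matrix (Fin n) (Fin m) ℝ)
    (hRm : ∀ (t : Fin n) (k : Fin m), Rm t k =
      if (k : ℕ) + 1 < j then ind (c k) (c ((k : ℕ) + 1)) t
      else if (k : ℕ) + 1 = j then ind (c (j - 1)) (c (j + 1)) t
      else ind (c ((k : ℕ) + 1)) (c ((k : ℕ) + 2)) t)
    (U : Fin n → ℝ) :
    ((1 - projMat Rm) *ᵥ U) ⬝ᵥ ((1 - projMat Rm) *ᵥ U) -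
        ((1 - projMat R) *ᵥ U) ⬝ᵥ ((1 - projMat R) *ᵥ U) =
      (Real.sqrt (((c (j + 1) : ℝ) - c j) * ((c j : ℝ) - c (j - 1)) /
            ((c (j + 1) : ℝ) - c (j - 1))) *
          ((ind (c (j - 1)) (c j) ⬝ᵥ U) / ((c j : ℝ) - c (j - 1)) -
            (ind (c j) (c (j + 1)) ⬝ᵥ U) / ((c (j + 1) : ℝ) - c j))) ^ 2 := by
  have hmono' : ∀ a b', a < b' → b' ≤ m + 1 → c a < c b' :=
    mono_aux c (m+1) (fun k hk => hcmono k (by omega))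
  have hresR := resid n (m+1) ind hind c (fun k hk => hcmono k (by omega))
    (le_of_eq hclast) R hR U
  set b : ℕ → ℕ := fun i => if i < j then c i else c (i+1) with hb
  have hbmono : ∀ k < m, b k < b (k+1) := by
    intro k hk
    simp only [hb]
    split_ifs <;> exact hmono' _ _ (by omega) (by omega)
  have hblast : b m ≤ n := by
    simp only [hb]
    split_ifs with h
    · exact absurd h (by omega)
    · exact le_of_eq hclast
  have hRmfit : ∀ (t : Fin n) (k : Fin m), Rm t k = ind (b k) (b ((k:ℕ)+1)) t := by
    intro t k
    rw [hRm]
    simp only [hb]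
    split_ifs <;> first
      | rfl
      | (congr 2 <;> omega)
      | (exfalso; omega)
  have hresRm := resid n m ind hind b hbmono hblast Rm hRmfit U
  set F : ℕ → ℝ := fun k => (ind (c k) (c (k+1)) ⬝ᵥ U)^2 / ((c (k+1):ℝ) - c k) with hF
  set G : ℕ → ℝ := fun k => (ind (b k) (b (k+1)) ⬝ᵥ U)^2 / ((b (k+1):ℝ) - b k) with hG
  have key : ∑ k ∈ range (m+1), F k - ∑ k ∈ range m, G k = F (j-1) + F j - G (j-1) := by
    have hj' : j - 1 + 1 = j := by omega
    have hGF : ∀ k, k < j - 1 → G k = F k := by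
      intro k hk
      simp only [hG, hF, hb]
      rw [if_pos (by omega : k < j), if_pos (by omega : k + 1 < j)]
    have A1 : ∑ k ∈ Finset.Ico 0 (j-1), F k + ∑ k ∈ Finset.Ico (j-1) (m+1), F k
        = ∑ k ∈ Finset.Ico 0 (m+1), F k := Finset.sum_Ico_consecutive F (by omega) (by omega)
    have A2 : ∑ k ∈ Finset.Ico (j-1) (j+1), F k + ∑ k ∈ Finset.Ico (j+1) (m+1), F k
        = ∑ k ∈ Finset.Ico (j-1) (m+1), F k := Finset.sum_Ico_consecutive F (by omega) (by omega)
    have A3 : ∑ k ∈ Finset.Ico (j-1) (j+1), F k = F (j-1) + F j := by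
      rw [Finset.sum_Ico_succ_top (by omega : j-1 ≤ j)]
      congr 1
      rw [Finset.sum_Ico_eq_sum_range, show j - (j-1) = 1 by omega, Finset.sum_range_one,
        Nat.add_zero]
    have B1 : ∑ k ∈ Finset.Ico 0 (j-1), G k + ∑ k ∈ Finset.Ico (j-1) m, G k
        = ∑ k ∈ Finset.Ico 0 m, G k := Finset.sum_Ico_consecutive G (by omega) (by omega)
    have B2 : ∑ k ∈ Finset.Ico (j-1) j, G k + ∑ k ∈ Finset.Ico j m, G k
        = ∑ k ∈ Finset.Ico (j-1) m, G k := Finset.sum_Ico_consecutive G (by omega) (by omega)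
    have B3 : ∑ k ∈ Finset.Ico (j-1) j, G k = G (j-1) := by
      rw [Finset.sum_Ico_eq_sum_range, show j - (j-1) = 1 by omega, Finset.sum_range_one,
        Nat.add_zero]
    have hhead : ∑ k ∈ Finset.Ico 0 (j-1), G k = ∑ k ∈ Finset.Ico 0 (j-1), F k :=
      Finset.sum_congr rfl (fun k hk => hGF k (Finset.mem_Ico.mp hk).2)
    have htail : ∑ k ∈ Finset.Ico j m, G k = ∑ k ∈ Finset.Ico (j+1) (m+1), F k := by
      rw [Finset.sum_Ico_eq_sum_range, Finset.sum_Ico_eq_sum_range,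
        show m + 1 - (j + 1) = m - j by omega]
      apply Finset.sum_congr rfl
      intro i _
      simp only [hG, hF, hb]
      rw [if_neg (by omega : ¬ j + i < j), if_neg (by omega : ¬ j + i + 1 < j)]
      rw [show j + i + 1 = j + 1 + i by omega]
    rw [range_eq_Ico, range_eq_Ico]
    linarith [A1, A2, A3, B1, B2, B3, hhead, htail]
  rw [hresRm, hresR]
  have lhs_eq : (U ⬝ᵥ U - ∑ k ∈ range m, G k) - (U ⬝ᵥ U - ∑ k ∈ range (m+1), F k)
      = F (j-1) + F j - G (j-1) := by rw [← key]; ring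
  rw [lhs_eq]
  -- now the pure algebra
  have hbj1 : b (j-1) = c (j-1) := by simp only [hb]; rw [if_pos (by omega)]
  have hbj : b j = c (j+1) := by simp only [hb]; rw [if_neg (by omega)]
  have hj' : j - 1 + 1 = j := by omega
  have hadd : ind (c (j-1)) (c (j+1)) ⬝ᵥ U
      = ind (c (j-1)) (c j) ⬝ᵥ U + ind (c j) (c (j+1)) ⬝ᵥ U := by
    rw [← add_dotProduct]
    congr 1
    funext t
    rw [hind, Pi.add_apply, hind, hind]
    generalize ((t:ℕ)+1) = s
    have h1 : c (j-1) ≤ c j := le_of_lt (hmono' _ _ (by omega) (by omega))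
    have h2 : c j ≤ c (j+1) := le_of_lt (hmono' _ _ (by omega) (by omega))
    split_ifs <;> first | ring1 | (exfalso; omega)
  simp only [hF, hG, hbj1, hbj, hj', hadd]
  set a1 : ℝ := ind (c (j-1)) (c j) ⬝ᵥ U
  set a2 : ℝ := ind (c j) (c (j+1)) ⬝ᵥ U
  have hp : (0:ℝ) < (c j : ℝ) - c (j-1) := by
    have := hmono' (j-1) j (by omega) (by omega)
    have : (c (j-1) : ℝ) < c j := by exact_mod_cast this
    linarith
  have hq : (0:ℝ) < (c (j+1) : ℝ) - c j := by
    have := hmono' j (j+1) (by omega) (by omega)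
    have : (c j : ℝ) < c (j+1) := by exact_mod_cast this
    linarith
  set p : ℝ := (c j : ℝ) - c (j-1)
  set q : ℝ := (c (j+1) : ℝ) - c j
  have hpq : (c (j+1) : ℝ) - c (j-1) = p + q := by simp only [p, q]; ring
  rw [hpq, mul_pow, Real.sq_sqrt (by positivity)]
  field_simp
  ring
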